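/- For every n ≥ 1 one has κ₂,ₙ₊₁ = −(ρ₁²/((conj(z₁ − z₂))² λ₁,ₙ₋₁²))·conj(κ₁,ₙ) and κ₁,ₙ₊₁ = −(ρ₂²/((conj(z₂ − z₁))² λ₂,ₙ₋₁²))·conj(κ₂,ₙ). -/

import Mathlib

theorem kappa_cross_relations
    (z₁ z₂ : ℂ) (hz : z₁ ≠ z₂) (ρ ρ₁ ρ₂ : ℝ)
    (hρ : ρ = ‖z₁ - z₂‖)
    (hρ₁ : 0 < ρ₁) (hρ₂ : 0 < ρ₂) (hsum : ρ₁ + ρ₂ < ρ)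
    (Λ₁ Λ₂ Λ : ℝ) (hΛ₁ : Λ₁ = (ρ₁ / ρ) ^ 2) (hΛ₂ : Λ₂ = (ρ₂ / ρ) ^ 2)
    (hΛ : Λ = (Λ₁ - Λ₂) ^ 2 + 1 - 2 * (Λ₁ + Λ₂))
    (l₁ l₂ : ℕ → ℝ) (hl₁0 : l₁ 0 = 1) (hl₂0 : l₂ 0 = 1)
    (hl₁ : ∀ n : ℕ, l₁ (n + 1) = 1 - Λ₂ / l₂ n)
    (hl₂ : ∀ n : ℕ, l₂ (n + 1) = 1 - Λ₁ / l₁ n)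
    (κ₁ κ₂ : ℕ → ℂ)
    (hκ₁1 : κ₁ 1 = ((2 * ρ₂ ^ 2 : ℝ) : ℂ))
    (hκ₁2 : κ₁ 2 = -(2 * (((ρ₁ * ρ₂ : ℝ)) : ℂ) ^ 2) / (starRingEnd ℂ (z₂ - z₁)) ^ 2)
    (hκ₁rec : ∀ n : ℕ, 1 ≤ n →
      κ₁ (n + 2) = ((Λ₁ * Λ₂ / (l₂ n * l₁ (n - 1)) ^ 2 : ℝ) : ℂ) * κ₁ n)
    (hκ₂1 : κ₂ 1 = ((2 * ρ₁ ^ 2 : ℝ) : ℂ))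
    (hκ₂2 : κ₂ 2 = -(2 * (((ρ₁ * ρ₂ : ℝ)) : ℂ) ^ 2) / (starRingEnd ℂ (z₁ - z₂)) ^ 2)
    (hκ₂rec : ∀ n : ℕ, 1 ≤ n →
      κ₂ (n + 2) = ((Λ₁ * Λ₂ / (l₁ n * l₂ (n - 1)) ^ 2 : ℝ) : ℂ) * κ₂ n) :
    ∀ n : ℕ, 1 ≤ n →
      κ₂ (n + 1) = -(((ρ₁ ^ 2 : ℝ) : ℂ) / ((starRingEnd ℂ (z₁ - z₂)) ^ 2 * ((l₁ (n - 1) : ℝ) : ℂ) ^ 2)) *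
          starRingEnd ℂ (κ₁ n) ∧
      κ₁ (n + 1) = -(((ρ₂ ^ 2 : ℝ) : ℂ) / ((starRingEnd ℂ (z₂ - z₁)) ^ 2 * ((l₂ (n - 1) : ℝ) : ℂ) ^ 2)) *
          starRingEnd ℂ (κ₂ n) := by
  have hw : z₁ - z₂ ≠ 0 := sub_ne_zero.mpr hz
  have hw' : z₂ - z₁ ≠ 0 := sub_ne_zero.mpr hz.symm
  have hc : starRingEnd ℂ (z₁ - z₂) ≠ 0 := by
    rw [starRingEnd_apply, star_ne_zero]; exact hw
  have hc' : starRingEnd ℂ (z₂ - z₁) ≠ 0 := by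
    rw [starRingEnd_apply, star_ne_zero]; exact hw'
  have hρ0 : ρ ≠ 0 := by
    rw [hρ]; exact ne_of_gt (norm_pos_iff.mpr hw)
  have key : starRingEnd ℂ (z₁ - z₂) * (z₁ - z₂) = ((ρ : ℂ)) ^ 2 := by
    rw [mul_comm, Complex.mul_conj, hρ, ← Complex.sq_norm]
    push_cast
    ring
  have key2 : (starRingEnd ℂ (z₁ - z₂)) ^ 2 * (z₂ - z₁) ^ 2 = ((ρ : ℂ)) ^ 4 := by
    linear_combination (starRingEnd ℂ (z₁ - z₂) * (z₁ - z₂) + (ρ : ℂ) ^ 2) * key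
  have key2' : (starRingEnd ℂ (z₂ - z₁)) ^ 2 * (z₁ - z₂) ^ 2 = ((ρ : ℂ)) ^ 4 := by
    rw [show z₂ - z₁ = -(z₁ - z₂) by ring, map_neg, neg_sq]
    linear_combination key2
  have main : ∀ (C w κ : ℂ) (a b r s : ℝ), C ≠ 0 → w ≠ 0 → C ^ 2 * w ^ 2 = ((ρ : ℂ)) ^ 4 →
      (((r / ρ) ^ 2 * (s / ρ) ^ 2 / (a * b) ^ 2 : ℝ) : ℂ) * κ
        = -(((r ^ 2 : ℝ) : ℂ) / (C ^ 2 * ((a : ℝ) : ℂ) ^ 2)) *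
            (-(((s ^ 2 : ℝ) : ℂ) / (w ^ 2 * ((b : ℝ) : ℂ) ^ 2)) * κ) := by
    intro C w κ a b r s hC hww keyCw
    rcases eq_or_ne a 0 with ha | ha
    · simp [ha]
    rcases eq_or_ne b 0 with hb | hb
    · simp [hb]
    have ha' : ((a : ℝ) : ℂ) ≠ 0 := Complex.ofReal_ne_zero.mpr ha
    have hb' : ((b : ℝ) : ℂ) ≠ 0 := Complex.ofReal_ne_zero.mpr hb
    have hρ' : ((ρ : ℝ) : ℂ) ≠ 0 := Complex.ofReal_ne_zero.mpr hρ0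
    push_cast
    field_simp
    linear_combination ((r : ℂ) ^ 2 * (s : ℂ) ^ 2 * κ) * keyCw
  intro n hn
  induction n, hn using Nat.le_induction with
  | base =>
    constructor
    · rw [hκ₂2, hκ₁1]
      simp only [show (1 : ℕ) - 1 = 0 from rfl, hl₁0, Complex.conj_ofReal]
      push_cast
      field_simp
    · rw [hκ₁2, hκ₂1]
      simp only [show (1 : ℕ) - 1 = 0 from rfl, hl₂0, Complex.conj_ofReal]
      push_cast
      field_simp
  | succ n hn ih =>
    obtain ⟨ih1, ih2⟩ := ih
    constructor
    · rw [hκ₂rec n hn]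
      simp only [Nat.add_sub_cancel]
      rw [ih2]
      simp only [map_mul, map_neg, map_div₀, map_pow, Complex.conj_conj, Complex.conj_ofReal]
      rw [hΛ₁, hΛ₂]
      exact main _ _ _ _ _ _ _ hc hw' key2
    · rw [hκ₁rec n hn]
      simp only [Nat.add_sub_cancel]
      rw [ih1]
      simp only [map_mul, map_neg, map_div₀, map_pow, Complex.conj_conj, Complex.conj_ofReal]
      rw [hΛ₁, hΛ₂, mul_comm ((ρ₁ / ρ) ^ 2) ((ρ₂ / ρ) ^ 2)]
      exact main _ _ _ _ _ _ _ hc' hw key2'
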